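/- Expansion inequality: let n, m ≥ 0, A ⊆ Act, and a_i, b_j ∈ Act for each i < n and j < m. Then □_{i<n} a_i.p_i ∥_A □_{j<m} b_j.q_j ⊑_RS ((□Ω₁) □ (□Ω₂)) □ (□Ω₃), where □Ω₁ is the general external choice of all a_i.(p_i ∥_A □_{j<m} b_j.q_j) with i < n and a_i ∉ A, □Ω₂ is the general external choice of all b_j.((□_{i<n} a_i.p_i) ∥_A q_j) with j < m and b_j ∉ A, and □Ω₃ is the general external choice of all a_i.(p_i ∥_A q_j) with i < n, j < m and a_i = b_j ∈ A. -/

import Mathlib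

open Classical

/-- Visible actions plus the invisible action τ. -/
inductive ActT (Act : Type) : Type where
  | act : Act → ActT Act
  | tau : ActT Act

/-- Processes of the recursion-free calculus CLL. -/
inductive Proc (Act : Type) : Type where
  | nil  : Proc Act                                -- 0
  | bot  : Proc Act                                -- ⊥
  | pre  : ActT Act → Proc Act → Proc Act          -- α.t
  | ec   : Proc Act → Proc Act → Proc Act          -- t □ t
  | conj : Proc Act → Proc Act → Proc Act          -- t ∧ t
  | disj : Proc Act → Proc Act → Proc Act          -- t ∨ t
  | par  : Set Act → Proc Act → Proc Act → Proc Act -- t ∥_A t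

namespace Proc

variable {Act : Type}

/-- Whether a process has a τ-transition (structural stratification used for
the negative premises of the SOS rules). -/
def hasTau : Proc Act → Prop
  | nil => False
  | bot => False
  | pre a _ => a = ActT.tau
  | ec t₁ t₂ => hasTau t₁ ∨ hasTau t₂
  | conj t₁ t₂ => hasTau t₁ ∨ hasTau t₂
  | disj _ _ => True
  | par _ t₁ t₂ => hasTau t₁ ∨ hasTau t₂

/-- The transition relation, given by the SOS rules of CLL_R. -/
inductive Trans : Proc Act → ActT Act → Proc Act → Prop where
  | pre : Trans (pre α t) α t
  | ecL : Trans t₁ (ActT.act a) t₁' → ¬ hasTau t₂ →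
      Trans (ec t₁ t₂) (ActT.act a) t₁'
  | ecR : ¬ hasTau t₁ → Trans t₂ (ActT.act a) t₂' →
      Trans (ec t₁ t₂) (ActT.act a) t₂'
  | ecTauL : Trans t₁ ActT.tau t₁' → Trans (ec t₁ t₂) ActT.tau (ec t₁' t₂)
  | ecTauR : Trans t₂ ActT.tau t₂' → Trans (ec t₁ t₂) ActT.tau (ec t₁ t₂')
  | conjAct : Trans t₁ (ActT.act a) t₁' → Trans t₂ (ActT.act a) t₂' →
      Trans (conj t₁ t₂) (ActT.act a) (conj t₁' t₂')
  | conjTauL : Trans t₁ ActT.tau t₁' → Trans (conj t₁ t₂) ActT.tau (conj t₁' t₂)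
  | conjTauR : Trans t₂ ActT.tau t₂' → Trans (conj t₁ t₂) ActT.tau (conj t₁ t₂')
  | disjL : Trans (disj t₁ t₂) ActT.tau t₁
  | disjR : Trans (disj t₁ t₂) ActT.tau t₂
  | parTauL : Trans t₁ ActT.tau t₁' → Trans (par A t₁ t₂) ActT.tau (par A t₁' t₂)
  | parTauR : Trans t₂ ActT.tau t₂' → Trans (par A t₁ t₂) ActT.tau (par A t₁ t₂')
  | parL : a ∉ A → Trans t₁ (ActT.act a) t₁' → ¬ hasTau t₂ →
      Trans (par A t₁ t₂) (ActT.act a) (par A t₁' t₂)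
  | parR : a ∉ A → ¬ hasTau t₁ → Trans t₂ (ActT.act a) t₂' →
      Trans (par A t₁ t₂) (ActT.act a) (par A t₁ t₂')
  | parSync : a ∈ A → Trans t₁ (ActT.act a) t₁' → Trans t₂ (ActT.act a) t₂' →
      Trans (par A t₁ t₂) (ActT.act a) (par A t₁' t₂')

/-- The ready set I(p). -/
def ready (p : Proc Act) : Set (ActT Act) := {α | ∃ q, Trans p α q}

/-- p is stable if it has no τ-transition. -/
def Stable (p : Proc Act) : Prop := ∀ q, ¬ Trans p ActT.tau q

/-- The inconsistency predicate F, as the least predicate closed under the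
predicative rules of CLL_R. -/
inductive Fp : Proc Act → Prop where
  | bot : Fp bot
  | pre : Fp t → Fp (pre α t)
  | disj : Fp t₁ → Fp t₂ → Fp (disj t₁ t₂)
  | ecL : Fp t₁ → Fp (ec t₁ t₂)
  | ecR : Fp t₂ → Fp (ec t₁ t₂)
  | parL : Fp t₁ → Fp (par A t₁ t₂)
  | parR : Fp t₂ → Fp (par A t₁ t₂)
  | conjL : Fp t₁ → Fp (conj t₁ t₂)
  | conjR : Fp t₂ → Fp (conj t₁ t₂)
  | conjReady : Stable (conj t₁ t₂) → ready t₁ ≠ ready t₂ → Fp (conj t₁ t₂)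
  | conjSucc : Trans (conj t₁ t₂) α s → (∀ y, Trans (conj t₁ t₂) α y → Fp y) →
      Fp (conj t₁ t₂)
  | conjStable :
      (∀ y, Relation.ReflTransGen (fun x z => Trans x ActT.tau z) (conj t₁ t₂) y →
        Stable y → Fp y) →
      Fp (conj t₁ t₂)

/-- One τ-step with both endpoints consistent. -/
def tauStepF (p q : Proc Act) : Prop := Trans p ActT.tau q ∧ ¬ Fp p ∧ ¬ Fp q

/-- p ⇒_F| q : a sequence of τ-transitions from p to q, all states outside F,
with q stable. -/
def epsF (p q : Proc Act) : Prop :=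
  Relation.ReflTransGen tauStepF p q ∧ ¬ Fp p ∧ ¬ Fp q ∧ Stable q

/-- p =a⇒_F| q. -/
def wkF (a : Act) (p q : Proc Act) : Prop :=
  ∃ r s, Relation.ReflTransGen tauStepF p r ∧ ¬ Fp p ∧ ¬ Fp r ∧
    Trans r (ActT.act a) s ∧ ¬ Fp s ∧
    Relation.ReflTransGen tauStepF s q ∧ ¬ Fp q ∧ Stable q

/-- R is a stable ready simulation. -/
def StableRS (R : Proc Act → Proc Act → Prop) : Prop :=
  ∀ p q, R p q →
    Stable p ∧ Stable q ∧
    (¬ Fp p → ¬ Fp q) ∧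
    (∀ a p', wkF a p p' → ∃ q', wkF a q q' ∧ R p' q') ∧
    (¬ Fp p → ready p = ready q)

/-- p ⊏̃_RS q. -/
def rsLT (p q : Proc Act) : Prop := ∃ R, StableRS R ∧ R p q

/-- p ⊑_RS q. -/
def rsLE (p q : Proc Act) : Prop :=
  ∀ p', epsF p p' → ∃ q', epsF q q' ∧ rsLT p' q'

/-- p =_RS q. -/
def rsEq (p q : Proc Act) : Prop := rsLE p q ∧ rsLE q p

/-- Basic process terms T(Σ_B): no ⊥ and no ∧. -/
inductive Basic : Proc Act → Prop where
  | nil : Basic nil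
  | pre : Basic t → Basic (pre α t)
  | disj : Basic t₁ → Basic t₂ → Basic (disj t₁ t₂)
  | ec : Basic t₁ → Basic t₂ → Basic (ec t₁ t₂)
  | par : Basic t₁ → Basic t₂ → Basic (par A t₁ t₂)

/-- General external choice □ over a finite sequence (left-nested). -/
def ecList : List (Proc Act) → Proc Act
  | [] => nil
  | t :: ts => ts.foldl ec t

/-- General disjunction ⋁ over a nonempty finite sequence (left-nested). -/
def djList : List (Proc Act) → Proc Act
  | [] => bot
  | t :: ts => ts.foldl disj t

/-- □_{i<n} a_i.t_i for a sequence of prefixed terms. -/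
def ecPre (l : List (Act × Proc Act)) : Proc Act :=
  ecList (l.map fun x => pre (ActT.act x.1) x.2)

/-- The expansion term E = ((□Ω₁) □ (□Ω₂)) □ (□Ω₃). -/
noncomputable def expTerm (A : Set Act) (l₁ l₂ : List (Act × Proc Act)) : Proc Act :=
  ec (ec
      (ecList ((l₁.filter fun x => decide (x.1 ∉ A)).map
        fun x => pre (ActT.act x.1) (par A x.2 (ecPre l₂))))
      (ecList ((l₂.filter fun x => decide (x.1 ∉ A)).map
        fun x => pre (ActT.act x.1) (par A (ecPre l₁) x.2))))
    (ecList (l₁.flatMap fun x =>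
      (l₂.filter fun y => decide (y.1 = x.1 ∧ x.1 ∈ A)).map
        fun y => pre (ActT.act x.1) (par A x.2 y.2)))

/-- Normal forms NF_B. -/
inductive NFB : Proc Act → Prop where
  | mk (ls : List (List (Act × Proc Act))) (hne : ls ≠ [])
      (hnodup : ∀ l ∈ ls, (l.map Prod.fst).Nodup)
      (hsub : ∀ l ∈ ls, ∀ x ∈ l, NFB x.2) :
      NFB (djList (ls.map ecPre))

/-- NF = NF_B ∪ {⊥}. -/
def NF (p : Proc Act) : Prop := NFB p ∨ p = bot

/-- Derivability ⊢ t ≤ t' in the proof system AX_CLL. -/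
inductive Deriv : Proc Act → Proc Act → Prop where
  | refl (t) : Deriv t t
  | trans : Deriv t t' → Deriv t' t'' → Deriv t t''
  | mono_pre : Deriv t t' → Deriv (pre α t) (pre α t')
  | mono_ec : Deriv s s' → Deriv t t' → Deriv (ec s t) (ec s' t')
  | mono_conj : Deriv s s' → Deriv t t' → Deriv (conj s t) (conj s' t')
  | mono_disj : Deriv s s' → Deriv t t' → Deriv (disj s t) (disj s' t')
  | mono_par : Deriv s s' → Deriv t t' → Deriv (par A s t) (par A s' t')
  -- external choice
  | ec_comm : Deriv (ec x y) (ec y x)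
  | ec_assoc₁ : Deriv (ec (ec x y) z) (ec x (ec y z))
  | ec_assoc₂ : Deriv (ec x (ec y z)) (ec (ec x y) z)
  | ec_idem₁ : Deriv (ec x x) x
  | ec_idem₂ : Deriv x (ec x x)
  | ec_nil₁ : Deriv (ec x nil) x
  | ec_nil₂ : Deriv x (ec x nil)
  | ec_bot₁ : Deriv (ec x bot) bot
  | ec_bot₂ : Deriv bot (ec x bot)
  -- disjunction
  | disj_comm : Deriv (disj x y) (disj y x)
  | disj_assoc₁ : Deriv (disj x (disj y z)) (disj (disj x y) z)
  | disj_assoc₂ : Deriv (disj (disj x y) z) (disj x (disj y z))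
  | disj_idem₁ : Deriv (disj x x) x
  | disj_idem₂ : Deriv x (disj x x)
  | disj_bot₁ : Deriv (disj x bot) x
  | disj_bot₂ : Deriv x (disj x bot)
  | disj_le : Deriv x (disj x y)
  -- conjunction
  | conj_comm : Deriv (conj x y) (conj y x)
  | conj_idem₁ : Deriv (conj x x) x
  | conj_idem₂ : Deriv x (conj x x)
  | conj_bot₁ : Deriv (conj x bot) bot
  | conj_bot₂ : Deriv bot (conj x bot)
  -- prefixing
  | pre_bot₁ : Deriv (pre (ActT.act a) bot) bot
  | pre_bot₂ : Deriv bot (pre (ActT.act a) bot)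
  | tau_pre₁ : Deriv (pre ActT.tau x) x
  | tau_pre₂ : Deriv x (pre ActT.tau x)
  -- parallel
  | par_comm : Deriv (par A x y) (par A y x)
  | par_bot₁ : Deriv (par A x bot) bot
  | par_bot₂ : Deriv bot (par A x bot)
  -- distribution over disjunction
  | ds_ec : Deriv (ec x (disj y z)) (disj (ec x y) (ec x z))
  | ds_conj : Deriv (conj x (disj y z)) (disj (conj x y) (conj x z))
  | ds_par : Deriv (par A x (disj y z)) (disj (par A x y) (par A x z))
  | ds_pre : Basic x → Basic y →
      Deriv (pre (ActT.act a) (disj x y)) (ec (pre (ActT.act a) x) (pre (ActT.act a) y))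
  -- external choice and conjunction
  | ecc1₁ (l₁ l₂ : List (Act × Proc Act)) :
      {a | a ∈ l₁.map Prod.fst} ≠ {a | a ∈ l₂.map Prod.fst} →
      Deriv (conj (ecPre l₁) (ecPre l₂)) bot
  | ecc1₂ (l₁ l₂ : List (Act × Proc Act)) :
      {a | a ∈ l₁.map Prod.fst} ≠ {a | a ∈ l₂.map Prod.fst} →
      Deriv bot (conj (ecPre l₁) (ecPre l₂))
  | ecc2 (l : List (Act × Proc Act × Proc Act)) :
      Deriv (ecPre (l.map fun x => (x.1, conj x.2.1 x.2.2)))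
            (conj (ecPre (l.map fun x => (x.1, x.2.1)))
                  (ecPre (l.map fun x => (x.1, x.2.2))))
  | ecc3 (l : List (Act × Proc Act × Proc Act)) :
      (l.map Prod.fst).Nodup →
      Deriv (conj (ecPre (l.map fun x => (x.1, x.2.1)))
                  (ecPre (l.map fun x => (x.1, x.2.2))))
            (ecPre (l.map fun x => (x.1, conj x.2.1 x.2.2)))
  -- expansion
  | exp1 (A : Set Act) (l₁ l₂ : List (Act × Proc Act)) :
      Deriv (par A (ecPre l₁) (ecPre l₂)) (expTerm A l₁ l₂)
  | exp2 (A : Set Act) (l₁ l₂ : List (Act × Proc Act)) :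
      (∀ x ∈ l₁, Basic x.2) → (∀ x ∈ l₂, Basic x.2) →
      Deriv (expTerm A l₁ l₂) (par A (ecPre l₁) (ecPre l₂))

end Proc

namespace Proc

section Aux

variable {Act : Type}

lemma trans_tau_hasTau' : ∀ {t : Proc Act} {α q}, Trans t α q → α = ActT.tau → hasTau t := by
  intro t α q h
  induction h <;> intro hα <;> simp_all [hasTau]

lemma trans_tau_hasTau {t q : Proc Act} (h : Trans t ActT.tau q) : hasTau t :=
  trans_tau_hasTau' h rfl

lemma stable_of_not_hasTau {t : Proc Act} (h : ¬ hasTau t) : Stable t :=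
  fun q ht => h (trans_tau_hasTau ht)

lemma trans_pre_iff {α β : ActT Act} {t s : Proc Act} :
    Trans (pre β t) α s ↔ α = β ∧ s = t := by
  constructor
  · intro h; cases h; exact ⟨rfl, rfl⟩
  · rintro ⟨rfl, rfl⟩; exact Trans.pre

lemma not_trans_nil {α : ActT Act} {s : Proc Act} : ¬ Trans (nil : Proc Act) α s := by
  intro h; cases h

lemma trans_ec_iff {t₁ t₂ : Proc Act} (h₁ : ¬ hasTau t₁) (h₂ : ¬ hasTau t₂) {α s} :
    Trans (ec t₁ t₂) α s ↔ Trans t₁ α s ∨ Trans t₂ α s := by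
  constructor
  · intro h
    cases h with
    | ecL h _ => exact Or.inl h
    | ecR _ h => exact Or.inr h
    | ecTauL h => exact absurd (trans_tau_hasTau h) h₁
    | ecTauR h => exact absurd (trans_tau_hasTau h) h₂
  · intro h
    cases α with
    | tau =>
      rcases h with h | h
      · exact absurd (trans_tau_hasTau h) h₁
      · exact absurd (trans_tau_hasTau h) h₂
    | act a =>
      rcases h with h | h
      · exact Trans.ecL h h₂
      · exact Trans.ecR h₁ h

lemma not_hasTau_foldl_ec (ps : List (Proc Act)) :
    ∀ t₀, ¬ hasTau t₀ → (∀ t ∈ ps, ¬ hasTau t) → ¬ hasTau (ps.foldl ec t₀) := by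
  induction ps with
  | nil => intro t₀ h _; exact h
  | cons p ps ih =>
    intro t₀ h₀ h
    refine ih (ec t₀ p) ?_ (fun t ht => h t (List.mem_cons_of_mem _ ht))
    simp only [hasTau, not_or]
    exact ⟨h₀, h p List.mem_cons_self⟩

lemma not_hasTau_ecList (l : List (Proc Act)) (h : ∀ t ∈ l, ¬ hasTau t) :
    ¬ hasTau (ecList l) := by
  cases l with
  | nil => simp [ecList, hasTau]
  | cons p ps =>
    exact not_hasTau_foldl_ec ps p (h p List.mem_cons_self)
      (fun t ht => h t (List.mem_cons_of_mem _ ht))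

lemma trans_foldl_ec (ps : List (Proc Act)) :
    ∀ t₀, ¬ hasTau t₀ → (∀ t ∈ ps, ¬ hasTau t) → ∀ {α s},
      Trans (ps.foldl ec t₀) α s ↔ Trans t₀ α s ∨ ∃ t ∈ ps, Trans t α s := by
  induction ps with
  | nil => intro t₀ _ _ α s; simp
  | cons p ps ih =>
    intro t₀ h₀ h α s
    have hp : ¬ hasTau p := h p List.mem_cons_self
    have h' : ∀ t ∈ ps, ¬ hasTau t := fun t ht => h t (List.mem_cons_of_mem _ ht)
    have he : ¬ hasTau (ec t₀ p) := by simp only [hasTau, not_or]; exact ⟨h₀, hp⟩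
    rw [List.foldl_cons, ih (ec t₀ p) he h', trans_ec_iff h₀ hp]
    simp only [List.mem_cons]
    constructor
    · rintro ((hh | hh) | ⟨t, ht, hh⟩)
      exacts [Or.inl hh, Or.inr ⟨p, Or.inl rfl, hh⟩, Or.inr ⟨t, Or.inr ht, hh⟩]
    · rintro (hh | ⟨t, (rfl | ht), hh⟩)
      exacts [Or.inl (Or.inl hh), Or.inl (Or.inr hh), Or.inr ⟨t, ht, hh⟩]

lemma trans_ecList_iff (l : List (Proc Act)) (h : ∀ t ∈ l, ¬ hasTau t) {α s} :
    Trans (ecList l) α s ↔ ∃ t ∈ l, Trans t α s := by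
  cases l with
  | nil => simp [ecList, not_trans_nil]
  | cons p ps =>
    rw [show ecList (p :: ps) = ps.foldl ec p from rfl,
      trans_foldl_ec ps p (h p List.mem_cons_self)
        (fun t ht => h t (List.mem_cons_of_mem _ ht))]
    simp only [List.mem_cons]
    constructor
    · rintro (hh | ⟨t, ht, hh⟩)
      exacts [⟨p, Or.inl rfl, hh⟩, ⟨t, Or.inr ht, hh⟩]
    · rintro ⟨t, (rfl | ht), hh⟩
      exacts [Or.inl hh, Or.inr ⟨t, ht, hh⟩]

lemma not_Fp_nil : ¬ Fp (nil : Proc Act) := by intro h; cases h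

lemma Fp_pre_iff {α : ActT Act} {t : Proc Act} : Fp (pre α t) ↔ Fp t := by
  constructor
  · intro h; cases h; assumption
  · exact Fp.pre

lemma Fp_ec_iff {t₁ t₂ : Proc Act} : Fp (ec t₁ t₂) ↔ Fp t₁ ∨ Fp t₂ := by
  constructor
  · intro h
    cases h with
    | ecL h => exact Or.inl h
    | ecR h => exact Or.inr h
  · rintro (h | h)
    exacts [Fp.ecL h, Fp.ecR h]

lemma Fp_par_iff {A : Set Act} {t₁ t₂ : Proc Act} : Fp (par A t₁ t₂) ↔ Fp t₁ ∨ Fp t₂ := by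
  constructor
  · intro h
    cases h with
    | parL h => exact Or.inl h
    | parR h => exact Or.inr h
  · rintro (h | h)
    exacts [Fp.parL h, Fp.parR h]

lemma Fp_foldl_ec (ps : List (Proc Act)) :
    ∀ t₀, Fp (ps.foldl ec t₀) ↔ Fp t₀ ∨ ∃ t ∈ ps, Fp t := by
  induction ps with
  | nil => intro t₀; simp
  | cons p ps ih =>
    intro t₀
    rw [List.foldl_cons, ih (ec t₀ p), Fp_ec_iff]
    simp only [List.mem_cons]
    constructor
    · rintro ((hh | hh) | ⟨t, ht, hh⟩)
      exacts [Or.inl hh, Or.inr ⟨p, Or.inl rfl, hh⟩, Or.inr ⟨t, Or.inr ht, hh⟩]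
    · rintro (hh | ⟨t, (rfl | ht), hh⟩)
      exacts [Or.inl (Or.inl hh), Or.inl (Or.inr hh), Or.inr ⟨t, ht, hh⟩]

lemma Fp_ecList_iff (l : List (Proc Act)) : Fp (ecList l) ↔ ∃ t ∈ l, Fp t := by
  cases l with
  | nil => simp [ecList, not_Fp_nil]
  | cons p ps =>
    rw [show ecList (p :: ps) = ps.foldl ec p from rfl, Fp_foldl_ec]
    simp only [List.mem_cons]
    constructor
    · rintro (hh | ⟨t, ht, hh⟩)
      exacts [⟨p, Or.inl rfl, hh⟩, ⟨t, Or.inr ht, hh⟩]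
    · rintro ⟨t, (rfl | ht), hh⟩
      exacts [Or.inl hh, Or.inr ⟨t, ht, hh⟩]

lemma trans_par_iff {A : Set Act} {t₁ t₂ : Proc Act} (h₁ : ¬ hasTau t₁) (h₂ : ¬ hasTau t₂)
    {α s} :
    Trans (par A t₁ t₂) α s ↔
      (∃ a t₁', α = ActT.act a ∧ a ∉ A ∧ Trans t₁ (ActT.act a) t₁' ∧ s = par A t₁' t₂) ∨
      (∃ a t₂', α = ActT.act a ∧ a ∉ A ∧ Trans t₂ (ActT.act a) t₂' ∧ s = par A t₁ t₂') ∨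
      (∃ a t₁' t₂', α = ActT.act a ∧ a ∈ A ∧ Trans t₁ (ActT.act a) t₁' ∧
        Trans t₂ (ActT.act a) t₂' ∧ s = par A t₁' t₂') := by
  constructor
  · intro h
    cases h with
    | parTauL h => exact absurd (trans_tau_hasTau h) h₁
    | parTauR h => exact absurd (trans_tau_hasTau h) h₂
    | parL hna h hs => exact Or.inl ⟨_, _, rfl, hna, h, rfl⟩
    | parR hna hs h => exact Or.inr (Or.inl ⟨_, _, rfl, hna, h, rfl⟩)
    | parSync ha hu hv => exact Or.inr (Or.inr ⟨_, _, _, rfl, ha, hu, hv, rfl⟩)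
  · rintro (⟨a, t', rfl, hna, h, rfl⟩ | ⟨a, t', rfl, hna, h, rfl⟩ |
      ⟨a, u, v, rfl, ha, hu, hv, rfl⟩)
    exacts [Trans.parL hna h h₂, Trans.parR hna h₁ h, Trans.parSync ha hu hv]

lemma not_hasTau_ecPre (l : List (Act × Proc Act)) : ¬ hasTau (ecPre l) := by
  apply not_hasTau_ecList
  intro t ht
  simp only [List.mem_map] at ht
  obtain ⟨x, -, rfl⟩ := ht
  simp [hasTau]

lemma trans_ecPre_iff (l : List (Act × Proc Act)) {α s} :
    Trans (ecPre l) α s ↔ ∃ x ∈ l, α = ActT.act x.1 ∧ s = x.2 := by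
  rw [show ecPre l = ecList (l.map fun x => pre (ActT.act x.1) x.2) from rfl,
    trans_ecList_iff]
  · constructor
    · rintro ⟨t, ht, h⟩
      simp only [List.mem_map] at ht
      obtain ⟨x, hx, rfl⟩ := ht
      rw [trans_pre_iff] at h
      exact ⟨x, hx, h.1, h.2⟩
    · rintro ⟨x, hx, rfl, rfl⟩
      exact ⟨_, List.mem_map_of_mem hx, Trans.pre⟩
  · intro t ht
    simp only [List.mem_map] at ht
    obtain ⟨x, -, rfl⟩ := ht
    simp [hasTau]

lemma Fp_ecPre_iff (l : List (Act × Proc Act)) : Fp (ecPre l) ↔ ∃ x ∈ l, Fp x.2 := by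
  rw [show ecPre l = ecList (l.map fun x => pre (ActT.act x.1) x.2) from rfl, Fp_ecList_iff]
  constructor
  · rintro ⟨t, ht, h⟩
    simp only [List.mem_map] at ht
    obtain ⟨x, hx, rfl⟩ := ht
    exact ⟨x, hx, Fp_pre_iff.mp h⟩
  · rintro ⟨x, hx, h⟩
    exact ⟨_, List.mem_map_of_mem hx, Fp_pre_iff.mpr h⟩

section Exp

variable (A : Set Act) (l₁ l₂ : List (Act × Proc Act))

lemma exp_parts_notTau :
    ¬ hasTau (ecList ((l₁.filter fun x => decide (x.1 ∉ A)).map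
        fun x => pre (ActT.act x.1) (par A x.2 (ecPre l₂)))) ∧
    ¬ hasTau (ecList ((l₂.filter fun x => decide (x.1 ∉ A)).map
        fun x => pre (ActT.act x.1) (par A (ecPre l₁) x.2))) ∧
    ¬ hasTau (ecList (l₁.flatMap fun x =>
      (l₂.filter fun y => decide (y.1 = x.1 ∧ x.1 ∈ A)).map
        fun y => pre (ActT.act x.1) (par A x.2 y.2))) := by
  refine ⟨not_hasTau_ecList _ ?_, not_hasTau_ecList _ ?_, not_hasTau_ecList _ ?_⟩
  · intro t ht
    simp only [List.mem_map] at ht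
    obtain ⟨x, -, rfl⟩ := ht
    simp [hasTau]
  · intro t ht
    simp only [List.mem_map] at ht
    obtain ⟨x, -, rfl⟩ := ht
    simp [hasTau]
  · intro t ht
    simp only [List.mem_flatMap, List.mem_map] at ht
    obtain ⟨x, -, y, -, rfl⟩ := ht
    simp [hasTau]

lemma not_hasTau_expTerm : ¬ hasTau (expTerm A l₁ l₂) := by
  obtain ⟨h1, h2, h3⟩ := exp_parts_notTau A l₁ l₂
  show ¬ hasTau (ec (ec _ _) _)
  simp only [hasTau, not_or]
  exact ⟨⟨h1, h2⟩, h3⟩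

lemma trans_exp_to_par {α s} (h : Trans (expTerm A l₁ l₂) α s) :
    Trans (par A (ecPre l₁) (ecPre l₂)) α s := by
  obtain ⟨h1, h2, h3⟩ := exp_parts_notTau A l₁ l₂
  rw [show expTerm A l₁ l₂ = ec (ec _ _) _ from rfl,
    trans_ec_iff (by simp only [hasTau, not_or]; exact ⟨h1, h2⟩) h3,
    trans_ec_iff h1 h2] at h
  rcases h with (h | h) | h
  · rw [trans_ecList_iff _ (fun t ht => by
      simp only [List.mem_map] at ht; obtain ⟨x, -, rfl⟩ := ht; simp [hasTau])] at h
    obtain ⟨t, ht, h⟩ := h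
    simp only [List.mem_map, List.mem_filter, decide_eq_true_eq] at ht
    obtain ⟨x, ⟨hx, hnA⟩, rfl⟩ := ht
    rw [trans_pre_iff] at h
    obtain ⟨rfl, rfl⟩ := h
    exact Trans.parL hnA (trans_ecPre_iff l₁ |>.mpr ⟨x, hx, rfl, rfl⟩) (not_hasTau_ecPre l₂)
  · rw [trans_ecList_iff _ (fun t ht => by
      simp only [List.mem_map] at ht; obtain ⟨x, -, rfl⟩ := ht; simp [hasTau])] at h
    obtain ⟨t, ht, h⟩ := h
    simp only [List.mem_map, List.mem_filter, decide_eq_true_eq] at ht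
    obtain ⟨x, ⟨hx, hnA⟩, rfl⟩ := ht
    rw [trans_pre_iff] at h
    obtain ⟨rfl, rfl⟩ := h
    exact Trans.parR hnA (not_hasTau_ecPre l₁) (trans_ecPre_iff l₂ |>.mpr ⟨x, hx, rfl, rfl⟩)
  · rw [trans_ecList_iff _ (fun t ht => by
      simp only [List.mem_flatMap, List.mem_map] at ht
      obtain ⟨x, -, y, -, rfl⟩ := ht; simp [hasTau])] at h
    obtain ⟨t, ht, h⟩ := h
    simp only [List.mem_flatMap, List.mem_map, List.mem_filter, decide_eq_true_eq] at ht
    obtain ⟨x, hx, y, ⟨hy, hyx, hA⟩, rfl⟩ := ht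
    rw [trans_pre_iff] at h
    obtain ⟨rfl, rfl⟩ := h
    exact Trans.parSync hA (trans_ecPre_iff l₁ |>.mpr ⟨x, hx, rfl, rfl⟩)
      (trans_ecPre_iff l₂ |>.mpr ⟨y, hy, by rw [hyx], rfl⟩)

lemma trans_par_to_exp {α s} (h : Trans (par A (ecPre l₁) (ecPre l₂)) α s) :
    Trans (expTerm A l₁ l₂) α s := by
  obtain ⟨h1, h2, h3⟩ := exp_parts_notTau A l₁ l₂
  have hXY : ¬ hasTau (ec
      (ecList ((l₁.filter fun x => decide (x.1 ∉ A)).map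
        fun x => pre (ActT.act x.1) (par A x.2 (ecPre l₂))))
      (ecList ((l₂.filter fun x => decide (x.1 ∉ A)).map
        fun x => pre (ActT.act x.1) (par A (ecPre l₁) x.2)))) := by
    simp only [hasTau, not_or]; exact ⟨h1, h2⟩
  rw [trans_par_iff (not_hasTau_ecPre l₁) (not_hasTau_ecPre l₂)] at h
  rw [show expTerm A l₁ l₂ = ec (ec _ _) _ from rfl, trans_ec_iff hXY h3,
    trans_ec_iff h1 h2]
  rcases h with ⟨a, t', rfl, hna, h, rfl⟩ | ⟨a, t', rfl, hna, h, rfl⟩ |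
    ⟨a, u, v, rfl, ha, hu, hv, rfl⟩
  · rw [trans_ecPre_iff] at h
    obtain ⟨x, hx, hax, rfl⟩ := h
    obtain ⟨rfl⟩ : a = x.1 := by cases hax; rfl
    refine Or.inl (Or.inl ?_)
    rw [trans_ecList_iff _ (fun t ht => by
      simp only [List.mem_map] at ht; obtain ⟨z, -, rfl⟩ := ht; simp [hasTau])]
    exact ⟨_, List.mem_map_of_mem (List.mem_filter.mpr ⟨hx, by
      simp only [decide_eq_true_eq]; exact hna⟩), Trans.pre⟩
  · rw [trans_ecPre_iff] at h
    obtain ⟨x, hx, hax, rfl⟩ := h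
    obtain ⟨rfl⟩ : a = x.1 := by cases hax; rfl
    refine Or.inl (Or.inr ?_)
    rw [trans_ecList_iff _ (fun t ht => by
      simp only [List.mem_map] at ht; obtain ⟨z, -, rfl⟩ := ht; simp [hasTau])]
    exact ⟨_, List.mem_map_of_mem (List.mem_filter.mpr ⟨hx, by
      simp only [decide_eq_true_eq]; exact hna⟩), Trans.pre⟩
  · rw [trans_ecPre_iff] at hu hv
    obtain ⟨x, hx, hax, rfl⟩ := hu
    obtain ⟨y, hy, hay, rfl⟩ := hv
    obtain ⟨rfl⟩ : a = x.1 := by cases hax; rfl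
    have hyx : y.1 = x.1 := by injection hay with h'; exact h'.symm
    refine Or.inr ?_
    rw [trans_ecList_iff _ (fun t ht => by
      simp only [List.mem_flatMap, List.mem_map] at ht
      obtain ⟨z, -, w, -, rfl⟩ := ht; simp [hasTau])]
    refine ⟨pre (ActT.act x.1) (par A x.2 y.2), ?_, Trans.pre⟩
    exact List.mem_flatMap.mpr ⟨x, hx, List.mem_map_of_mem (List.mem_filter.mpr ⟨hy, by
      simp only [decide_eq_true_eq]; exact ⟨hyx, ha⟩⟩)⟩

lemma Fp_exp_to_par (h : Fp (expTerm A l₁ l₂)) : Fp (par A (ecPre l₁) (ecPre l₂)) := by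
  rw [show expTerm A l₁ l₂ = ec (ec _ _) _ from rfl, Fp_ec_iff, Fp_ec_iff,
    Fp_ecList_iff, Fp_ecList_iff, Fp_ecList_iff] at h
  rcases h with (⟨t, ht, h⟩ | ⟨t, ht, h⟩) | ⟨t, ht, h⟩
  · simp only [List.mem_map, List.mem_filter] at ht
    obtain ⟨x, ⟨hx, -⟩, rfl⟩ := ht
    rw [Fp_pre_iff, Fp_par_iff] at h
    rcases h with h | h
    · exact Fp.parL ((Fp_ecPre_iff l₁).mpr ⟨x, hx, h⟩)
    · exact Fp.parR h
  · simp only [List.mem_map, List.mem_filter] at ht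
    obtain ⟨x, ⟨hx, -⟩, rfl⟩ := ht
    rw [Fp_pre_iff, Fp_par_iff] at h
    rcases h with h | h
    · exact Fp.parL h
    · exact Fp.parR ((Fp_ecPre_iff l₂).mpr ⟨x, hx, h⟩)
  · simp only [List.mem_flatMap, List.mem_map, List.mem_filter] at ht
    obtain ⟨x, hx, y, ⟨hy, -⟩, rfl⟩ := ht
    rw [Fp_pre_iff, Fp_par_iff] at h
    rcases h with h | h
    · exact Fp.parL ((Fp_ecPre_iff l₁).mpr ⟨x, hx, h⟩)
    · exact Fp.parR ((Fp_ecPre_iff l₂).mpr ⟨y, hy, h⟩)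

end Exp

lemma eq_of_rtg_tauStepF {p q : Proc Act} (hs : Stable p)
    (h : Relation.ReflTransGen (tauStepF (Act := Act)) p q) : q = p := by
  rcases h.cases_head with h | ⟨c, hc, -⟩
  · exact h.symm
  · exact absurd hc.1 (hs c)

end Aux

/-- Expansion inequality. -/
theorem stmt12 {Act : Type} (A : Set Act) (l₁ l₂ : List (Act × Proc Act)) :
    rsLE (par A (ecPre l₁) (ecPre l₂)) (expTerm A l₁ l₂) := by
  intro p' hp'
  obtain ⟨hrt, hFp, hFp', hst'⟩ := hp'
  have hpnt : ¬ hasTau (par A (ecPre l₁) (ecPre l₂)) := by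
    simp only [hasTau, not_or]
    exact ⟨not_hasTau_ecPre l₁, not_hasTau_ecPre l₂⟩
  have hps : Stable (par A (ecPre l₁) (ecPre l₂)) := stable_of_not_hasTau hpnt
  have hq := eq_of_rtg_tauStepF hps hrt
  subst hq
  have hEs : Stable (expTerm A l₁ l₂) := stable_of_not_hasTau (not_hasTau_expTerm A l₁ l₂)
  have hFE : ¬ Fp (expTerm A l₁ l₂) := fun h => hFp (Fp_exp_to_par A l₁ l₂ h)
  have hready : ready (par A (ecPre l₁) (ecPre l₂)) = ready (expTerm A l₁ l₂) := by
    ext α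
    simp only [ready, Set.mem_setOf_eq]
    exact ⟨fun ⟨s, hs⟩ => ⟨s, trans_par_to_exp A l₁ l₂ hs⟩,
      fun ⟨s, hs⟩ => ⟨s, trans_exp_to_par A l₁ l₂ hs⟩⟩
  refine ⟨expTerm A l₁ l₂, ⟨Relation.ReflTransGen.refl, hFE, hFE, hEs⟩, ?_⟩
  refine ⟨fun x y => (x = y ∧ Stable x) ∨
    (x = par A (ecPre l₁) (ecPre l₂) ∧ y = expTerm A l₁ l₂), ?_, Or.inr ⟨rfl, rfl⟩⟩
  rintro x y (⟨rfl, hsx⟩ | ⟨rfl, rfl⟩)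
  · refine ⟨hsx, hsx, id, ?_, fun _ => rfl⟩
    intro a x' hw
    refine ⟨x', hw, Or.inl ⟨rfl, ?_⟩⟩
    obtain ⟨r, s, -, -, -, -, -, -, -, h⟩ := hw
    exact h
  · refine ⟨hps, hEs, fun _ => hFE, ?_, fun _ => hready⟩
    intro a x' hw
    obtain ⟨r, s, hpr, -, -, hstep, hFs, hsx', hFx', hstx'⟩ := hw
    obtain rfl := eq_of_rtg_tauStepF hps hpr
    exact ⟨x', ⟨expTerm A l₁ l₂, s, Relation.ReflTransGen.refl, hFE, hFE,
      trans_par_to_exp A l₁ l₂ hstep, hFs, hsx', hFx', hstx'⟩, Or.inl ⟨rfl, hstx'⟩⟩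

end Proc
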